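/- Let k ≥ 2 and let w be any nonempty factor of the infinite Fibonacci word with |w| < Φ_k. Then |ShortBord(w)| < Φ_{k-2}. -/

import Mathlib

open List Filter

/-- The Zimin pattern `Z_k` as a word over variables `0, 1, ..., k-1`
(`Z_0` is empty, `Z_{k+1} = Z_k · x_{k+1} · Z_k`). -/
def ziminWord : ℕ → List ℕ
  | 0 => []
  | k + 1 => ziminWord k ++ k :: ziminWord k

/-- `w` is the image of the Zimin pattern `Z_k` under a non-erasing morphism. -/
def IsZiminImage {α : Type*} (k : ℕ) (w : List α) : Prop :=
  ∃ h : ℕ → List α, (∀ i, h i ≠ []) ∧ w = (ziminWord k).flatMap h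

/-- The Zimin type of `w`: the maximum `k` such that `w` is an image of `Z_k`
under a non-erasing morphism (0 for the empty word). -/
noncomputable def ziminType {α : Type*} (w : List α) : ℕ :=
  sSup {k | IsZiminImage k w}

/-- The Zimin pattern `Z_k` embeds in `w`: some factor of `w` is an image of `Z_k`. -/
def ziminEmbeds {α : Type*} (k : ℕ) (w : List α) : Prop :=
  ∃ u : List α, u <:+: w ∧ IsZiminImage k u

/-- Length of the longest border (proper prefix that is also a proper suffix) of `w`. -/
noncomputable def bordLen {α : Type*} (w : List α) : ℕ :=
  sSup {j | w.take j <:+ w ∧ j < w.length}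

/-- Length of the longest short border (border of length `< |w|/2`) of `w`. -/
noncomputable def shortBordLen {α : Type*} (w : List α) : ℕ :=
  sSup {j | w.take j <:+ w ∧ 2 * j < w.length}

/-- The longest border of `w`. -/
noncomputable def bord {α : Type*} (w : List α) : List α := w.take (bordLen w)

/-- The longest short border of `w`. -/
noncomputable def shortBord {α : Type*} (w : List α) : List α := w.take (shortBordLen w)

/-- The Fibonacci words over `Bool` (`a = false`, `b = true`), with
`fibWord 0 = F_0 = a`, `fibWord 1 = F_1 = F_0 F_{-1} = ab`, `F_{n} = F_{n-1} F_{n-2}`. -/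
def fibWord : ℕ → List Bool
  | 0 => [false]
  | 1 => [false, true]
  | n + 2 => fibWord (n + 1) ++ fibWord n

/-- The Fibonacci numbers `Φ_n = |F_n|` (`Φ_0 = 1, Φ_1 = 2, Φ_2 = 3, ...`). -/
def Phi (n : ℕ) : ℕ := (fibWord n).length

/-- The infinite Fibonacci word `F_∞` (0-indexed letters). -/
def fibInf (i : ℕ) : Bool := (fibWord (i + 2)).getD i false

/-- The prefix `F_∞[1..n]` of the infinite Fibonacci word. -/
def fibPrefix (n : ℕ) : List Bool := (List.range n).map fibInf


/-- `w` occurs in the infinite Fibonacci word at (0-indexed) position `i`. -/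
def fibOccursAt (w : List Bool) (i : ℕ) : Prop :=
  w = (List.range w.length).map (fun j => fibInf (i + j))

/-- `w` is a factor of the infinite Fibonacci word. -/
def IsFibFactor (w : List Bool) : Prop := ∃ i, fibOccursAt w i

open scoped goldenRatio

open scoped goldenRatio
noncomputable def gd (m : ℕ) : ℝ := (φ - 1) ^ m

lemma gold_def' : φ = (1 + Real.sqrt 5)/2 := rfl

lemma sqrt5_gt : (2.2360 : ℝ) < Real.sqrt 5 := by
  nlinarith [Real.sq_sqrt (by norm_num : (5:ℝ) ≥ 0), Real.sqrt_nonneg 5]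

lemma sqrt5_lt : Real.sqrt 5 < (2.2361 : ℝ) := by
  nlinarith [Real.sq_sqrt (by norm_num : (5:ℝ) ≥ 0), Real.sqrt_nonneg 5]

lemma phi_gt : (1.6180 : ℝ) < φ := by rw [gold_def']; nlinarith [sqrt5_gt]
lemma phi_lt : φ < (1.61805 : ℝ) := by rw [gold_def']; nlinarith [sqrt5_lt]

lemma gd_pos (m : ℕ) : 0 < gd m := pow_pos (by nlinarith [phi_gt]) m
lemma gd_zero : gd 0 = 1 := rfl
lemma gd_one : gd 1 = φ - 1 := pow_one _
lemma gd_succ (m : ℕ) : gd (m+1) = gd m * (φ - 1) := pow_succ _ _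
lemma sub_one_lt_one : φ - 1 < 1 := by nlinarith [phi_lt]
lemma gd_succ_lt (m : ℕ) : gd (m+1) < gd m := by
  rw [gd_succ]; nlinarith [gd_pos m, sub_one_lt_one, phi_gt]
lemma gd_anti : ∀ {a b : ℕ}, a ≤ b → gd b ≤ gd a := by
  intro a b h
  induction b with
  | zero => simp_all
  | succ n ih =>
    rcases Nat.lt_or_ge a (n+1) with h'|h'
    · exact le_trans (gd_succ_lt n).le (ih (by omega))
    · have : a = n+1 := by omega
      simp [this]
lemma gd_le_one (m : ℕ) : gd m ≤ 1 := by simpa [gd_zero] using gd_anti (Nat.zero_le m)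
lemma gd_two : gd 2 = 2 - φ := by
  have h : φ^2 = φ + 1 := Real.goldenRatio_sq
  simp only [gd]
  nlinarith [h]
lemma gd_add_two (m : ℕ) : gd (m+2) = gd m - gd (m+1) := by
  simp only [gd, pow_succ]
  have h : (φ-1)*(φ-1) = 1 - (φ-1) := by nlinarith [Real.goldenRatio_sq]
  nlinarith [mul_le_mul_of_nonneg_left h.le (le_of_lt (pow_pos (by nlinarith [phi_gt] : (0:ℝ) < φ - 1) m)), mul_le_mul_of_nonneg_left h.ge (le_of_lt (pow_pos (by nlinarith [phi_gt] : (0:ℝ) < φ - 1) m))]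
lemma psi_pow (m : ℕ) : ψ ^ m = (-1)^m * gd m := by
  have h : ψ = (-1) * (φ - 1) := by nlinarith [Real.one_sub_goldenConj]
  rw [h, mul_pow, gd]
lemma gd_mul_phi_pow (m : ℕ) : gd m * φ ^ m = 1 := by
  rw [gd, ← mul_pow]
  have : (φ-1)*φ = 1 := by nlinarith [Real.goldenRatio_sq]
  simp [this]
lemma fib_mul_phi (k : ℕ) : (Nat.fib k : ℝ) * φ = Nat.fib (k+1) - ψ^k := by
  have := Real.fib_succ_sub_goldenRatio_mul_fib k
  linarith [this]

/-- Solutions of the Fibonacci Diophantine equation are Fibonacci pairs. -/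
lemma desc : ∀ k : ℕ, ∀ n : ℕ, 1 ≤ k → k ≤ n →
    (n*n = k*n + k*k + 1 ∨ n*n + 1 = k*n + k*k) →
    ∃ r, 1 ≤ r ∧ k = Nat.fib r ∧ n = Nat.fib (r+1) := by
  intro k
  induction k using Nat.strong_induction_on with
  | _ k ih =>
    intro n hk hkn heq
    rcases Nat.eq_or_lt_of_le hkn with heqkn | hlt
    · -- k = n
      subst heqkn
      rcases heq with h | h
      · exfalso; nlinarith
      · have : k = 1 := by nlinarith
        exact ⟨1, le_refl 1, by simp [this], by simp [this]⟩
    · -- k < n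
      have h2k : n ≤ 2*k := by
        by_contra hc
        push_neg at hc
        rcases heq with h | h <;> nlinarith
      rcases Nat.eq_or_lt_of_le h2k with he | hlt2
      · -- n = 2k
        rcases heq with h | h
        · have : k = 1 := by nlinarith
          subst this
          exact ⟨2, by norm_num, by simp, by rw [he]; norm_num [Nat.fib]⟩
        · exfalso; nlinarith
      · -- n < 2k : descend
        have hk'' : n - k < k := by omega
        have hk1 : 1 ≤ n - k := by omega
        have hle : n - k ≤ k := by omega
        have heq' : (k*k = (n-k)*k + (n-k)*(n-k) + 1 ∨ k*k + 1 = (n-k)*k + (n-k)*(n-k)) := by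
          rcases heq with h | h
          · right
            zify [hlt.le, hle] at h ⊢
            nlinarith
          · left
            zify [hlt.le, hle] at h ⊢
            nlinarith
        obtain ⟨r, hr1, hrk, hrn⟩ := ih (n-k) hk'' k hk1 hle heq'
        refine ⟨r+1, by omega, hrn, ?_⟩
        have hn : n = k + (n - k) := by omega
        rw [Nat.fib_add_two, ← hrn, ← hrk]
        omega

lemma abs_psi_pow (m : ℕ) : |ψ ^ m| = gd m := by
  rw [abs_pow, abs_of_neg Real.goldenConj_neg, gd]
  congr 1
  nlinarith [Real.one_sub_goldenConj]

lemma sqrt5_mul_fib (n : ℕ) : Real.sqrt 5 * (Nat.fib n : ℝ) = φ^n - ψ^n := by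
  rw [Real.coe_fib_eq]
  field_simp

/-- Norm-form nonvanishing: n² - nk - k² ≠ 0 for k ≥ 1. -/
lemma V_ne_zero (k : ℕ) (n : ℤ) (hk : 1 ≤ k) : n^2 - n*k - k^2 ≠ 0 := by
  intro h
  have hsq : ((2*n - k)^2 : ℤ) = 5 * k^2 := by ring_nf; ring_nf at h; nlinarith [h]
  have h5 : Irrational (Real.sqrt 5) := (Nat.prime_five).irrational_sqrt
  have hknz : ((k:ℝ)) ≠ 0 := by positivity
  have hkpos : (0:ℝ) < (k:ℝ) := by exact_mod_cast hk
  have : Real.sqrt 5 = |((2*n - k : ℤ) : ℝ)| / (k:ℝ) := by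
    rw [eq_div_iff hknz]
    have h2 : (((2*n - k)^2 : ℤ) : ℝ) = 5 * (k:ℝ)^2 := by exact_mod_cast congrArg (Int.cast : ℤ → ℝ) hsq
    have habs : (((2*n - k : ℤ) : ℝ))^2 = 5 * (k:ℝ)^2 := by push_cast at h2 ⊢; nlinarith [h2]
    rw [← Real.sqrt_sq_eq_abs, habs, show (5:ℝ) * (k:ℝ)^2 = ((k:ℝ)^2) * 5 by ring,
       Real.sqrt_mul (by positivity) 5, Real.sqrt_sq (by positivity)]
    ring
  rw [this] at h5
  have : ∃ q : ℚ, (q:ℝ) = |((2*n - k : ℤ) : ℝ)| / (k:ℝ) := by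
    refine ⟨((2*n - k : ℤ).natAbs : ℚ) / (k : ℚ), ?_⟩
    push_cast
    rw [Nat.cast_natAbs]
    push_cast
    norm_num
  obtain ⟨q, hq⟩ := this
  exact h5 ⟨q, hq⟩

/-- Norm-form never ±2 (mod 5 obstruction). -/
lemma V_ne_two (k : ℕ) (n : ℤ) : n^2 - n*k - k^2 ≠ 2 ∧ n^2 - n*k - k^2 ≠ -2 := by
  have key : ∀ x y : ZMod 5, x^2 ≠ 5*y^2 + 8 ∧ x^2 ≠ 5*y^2 - 8 := by decide
  constructor <;> intro h
  · have hsq : ((2*n - k)^2 : ℤ) = 5*k^2 + 8 := by nlinarith [h]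
    have h2 : (((2*n - k : ℤ)) : ZMod 5)^2 = 5*(((k:ℤ)) : ZMod 5)^2 + 8 := by
      have := congrArg (fun z : ℤ => (z : ZMod 5)) hsq
      push_cast at this ⊢
      exact_mod_cast this
    exact (key _ _).1 h2
  · have hsq : ((2*n - k)^2 : ℤ) = 5*k^2 - 8 := by nlinarith [h]
    have h2 : (((2*n - k : ℤ)) : ZMod 5)^2 = 5*(((k:ℤ)) : ZMod 5)^2 - 8 := by
      have := congrArg (fun z : ℤ => (z : ZMod 5)) hsq
      push_cast at this ⊢
      exact_mod_cast this
    exact (key _ _).2 h2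

lemma gd_le_gold_sub_one (s : ℕ) (h : 1 ≤ s) : gd s ≤ φ - 1 := by
  simpa [gd_one] using gd_anti h

set_option maxHeartbeats 1600000 in
/-- Best approximation, exact form: the only very good approximant below fib (s+3) is fib (s+2). -/
lemma ba_unique (s : ℕ) (r : ℕ) (n : ℤ) (hr : 1 ≤ r) (hlt : r < Nat.fib (s+3))
    (hx : |(r:ℝ)*φ - n| < gd (s+1)) : r = Nat.fib (s+2) ∧ (r:ℝ)*φ - (n:ℝ) = -ψ^(s+2) := by
  have h1 : φ * ψ = -1 := Real.goldenRatio_mul_goldenConj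
  have h2 : φ + ψ = 1 := Real.goldenRatio_add_goldenConj
  have hid : ((r:ℝ)*φ - n) * ((r:ℝ)*ψ - n) = ((n^2 - n*r - r^2 : ℤ) : ℝ) := by
    push_cast
    linear_combination ((r:ℝ)^2) * h1 - ((r:ℝ)*(n:ℝ)) * h2
  have hVne : (n^2 - n*r - r^2 : ℤ) ≠ 0 := V_ne_zero r n hr
  have hV2 := V_ne_two r n
  have habs1 : 1 ≤ (n^2 - n*r - r^2 : ℤ).natAbs := Int.natAbs_pos.mpr hVne
  have hgd1 : gd (s+1) ≤ φ - 1 := gd_le_gold_sub_one (s+1) (by omega)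
  have hrR : (1:ℝ) ≤ (r:ℝ) := by exact_mod_cast hr
  have hxlt := hx
  have hsplit : (n^2 - n*r - r^2 : ℤ).natAbs = 1 ∨ 3 ≤ (n^2 - n*r - r^2 : ℤ).natAbs := by
    rcases hV2 with ⟨ha, hb⟩
    omega
  rcases hsplit with hV1 | hV3
  · -- the Fibonacci case
    have h1' : n^2 - n*r - r^2 = 1 ∨ n^2 - n*r - r^2 = -1 := by omega
    have hnr : (r:ℤ) < n := by
      have hab := abs_lt.mp hxlt
      have : ((r:ℤ):ℝ) < (n:ℝ) := by push_cast; nlinarith [phi_gt, hab.1, hab.2]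
      exact_mod_cast this
    obtain ⟨N, hN⟩ : ∃ N : ℕ, n = (N:ℤ) := ⟨n.toNat, (Int.toNat_of_nonneg (by omega)).symm⟩
    subst hN
    have hrN : r ≤ N := by exact_mod_cast hnr.le
    have heqn : N*N = r*N + r*r + 1 ∨ N*N + 1 = r*N + r*r := by
      rcases h1' with h | h
      · left; have : ((N*N : ℕ) : ℤ) = ((r*N + r*r + 1 : ℕ) : ℤ) := by push_cast; linarith [h]
        exact_mod_cast this
      · right; have : ((N*N + 1 : ℕ) : ℤ) = ((r*N + r*r : ℕ) : ℤ) := by push_cast; linarith [h]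
        exact_mod_cast this
    obtain ⟨ρ, hρ1, hρr, hρN⟩ := desc r N hr hrN heqn
    have hxval : (r:ℝ)*φ - (N:ℕ) = -ψ^ρ := by
      rw [hρr, hρN]
      have := fib_mul_phi ρ
      push_cast at this ⊢
      linarith [this]
    have habsx : |(r:ℝ)*φ - ((N:ℕ):ℤ)| = gd ρ := by
      push_cast
      rw [hxval, abs_neg, abs_psi_pow]
    have hρge : s+2 ≤ ρ := by
      by_contra hc
      push_neg at hc
      have : gd (s+1) ≤ gd ρ := gd_anti (by omega)
      rw [habsx] at hxlt
      linarith
    have hρle : ρ ≤ s+2 := by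
      by_contra hc
      push_neg at hc
      have : Nat.fib (s+3) ≤ Nat.fib ρ := Nat.fib_mono (by omega)
      omega
    have hρeq : ρ = s+2 := le_antisymm hρle hρge
    subst hρeq
    refine ⟨hρr, ?_⟩
    push_cast at hxval ⊢
    exact hxval
  · -- size contradiction
    exfalso
    have h3le : (3:ℝ) ≤ |((n^2 - n*r - r^2 : ℤ) : ℝ)| := by
      have h3 : (3:ℤ) ≤ |n^2 - n*r - r^2| := by
        rw [Int.abs_eq_natAbs]; exact_mod_cast hV3
      rw [← Int.cast_abs]
      exact_mod_cast h3
    rw [← hid, abs_mul] at h3le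
    have hconj : |(r:ℝ)*ψ - n| ≤ |(r:ℝ)*φ - n| + Real.sqrt 5 * r := by
      have he : (r:ℝ)*ψ - n = ((r:ℝ)*φ - n) + (-(Real.sqrt 5 * r)) := by
        rw [← Real.goldenRatio_sub_goldenConj]; ring
      rw [he]
      refine (abs_add_le _ _).trans ?_
      rw [abs_neg, abs_of_nonneg (by positivity : (0:ℝ) ≤ Real.sqrt 5 * r)]
    have hrle : (r:ℝ) ≤ (Nat.fib (s+3) : ℝ) - 1 := by
      have : r ≤ Nat.fib (s+3) - 1 := by omega
      have h2' : (r:ℝ) ≤ ((Nat.fib (s+3) - 1 : ℕ) : ℝ) := by exact_mod_cast this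
      have h3' : (1:ℕ) ≤ Nat.fib (s+3) := Nat.fib_pos.mpr (by omega)
      rw [Nat.cast_sub h3'] at h2'
      simpa using h2'
    have hf2 : Real.sqrt 5 * (Nat.fib (s+3) : ℝ) = φ^(s+3) - ψ^(s+3) := sqrt5_mul_fib (s+3)
    have hf1 : gd (s+1) * φ^(s+1) = 1 := gd_mul_phi_pow (s+1)
    have hf3 : |ψ^(s+3)| ≤ 1 := by rw [abs_psi_pow]; exact gd_le_one _
    have hgdpos : 0 < gd (s+1) := gd_pos _
    have hxnn : 0 ≤ |(r:ℝ)*φ - n| := abs_nonneg _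
    have hphi2 : φ^2 = φ + 1 := Real.goldenRatio_sq
    have hstep : gd (s+1) * φ^(s+3) = φ^2 := by
      have : φ^(s+3) = φ^(s+1) * φ^2 := by ring
      rw [this, ← mul_assoc, hf1, one_mul]
    have hs5 : Real.sqrt 5 > 2.2360 := sqrt5_gt
    have habs_psi := abs_le.mp hf3
    -- |x| * |conj| < 3
    have hbig : |(r:ℝ)*φ - n| * |(r:ℝ)*ψ - n| < 3 := by
      have hb1 : |(r:ℝ)*φ - n| * |(r:ℝ)*ψ - n| ≤ |(r:ℝ)*φ - n| * (|(r:ℝ)*φ - n| + Real.sqrt 5 * r) :=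
        mul_le_mul_of_nonneg_left hconj hxnn
      have hb2 : |(r:ℝ)*φ - n| * (|(r:ℝ)*φ - n| + Real.sqrt 5 * r) ≤
          gd (s+1) * (gd (s+1) + Real.sqrt 5 * r) := by
        apply mul_le_mul hxlt.le (by linarith [hxlt]) (by positivity) (le_of_lt hgdpos)
      have hb3 : gd (s+1) * (gd (s+1) + Real.sqrt 5 * r) ≤
          gd (s+1) * (gd (s+1) + (φ^(s+3) - ψ^(s+3)) - Real.sqrt 5) := by
        apply mul_le_mul_of_nonneg_left _ hgdpos.le
        have : Real.sqrt 5 * (r:ℝ) ≤ Real.sqrt 5 * ((Nat.fib (s+3):ℝ) - 1) :=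
          mul_le_mul_of_nonneg_left hrle (by positivity)
        nlinarith [this, hf2]
      have hb4 : gd (s+1) * (gd (s+1) + (φ^(s+3) - ψ^(s+3)) - Real.sqrt 5) < 3 := by
        have e1 : gd (s+1) * (gd (s+1) + (φ^(s+3) - ψ^(s+3)) - Real.sqrt 5)
            = gd (s+1)*gd (s+1) + φ^2 - gd (s+1)*ψ^(s+3) - Real.sqrt 5 * gd (s+1) := by
          linear_combination hstep
        have e2 : -(gd (s+1)*ψ^(s+3)) ≤ gd (s+1) := by nlinarith [habs_psi.1, hgdpos]
        have e3 : gd (s+1)*gd (s+1) ≤ gd (s+1)*φ - gd (s+1) := by nlinarith [hgd1, hgdpos]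
        have e4 : gd (s+1)*φ - Real.sqrt 5 * gd (s+1) ≤ 0 := by nlinarith [hgdpos, phi_lt, hs5]
        linarith [e1, e2, e3, e4, hphi2, phi_lt]
      linarith
    linarith

/-- Best approximation: k < fib (m+3) implies kφ is at distance ≥ gd (m+2) from any integer. -/
lemma ba (m k : ℕ) (n : ℤ) (h1 : 1 ≤ k) (h2 : k < Nat.fib (m+3)) :
    gd (m+2) ≤ |(k:ℝ)*φ - n| := by
  by_cases h : gd (m+1) ≤ |(k:ℝ)*φ - n|
  · exact le_trans (gd_anti (by omega)) h
  · obtain ⟨hk, hx⟩ := ba_unique m k n h1 h2 (not_le.mp h)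
    rw [hx, abs_neg, abs_psi_pow]

/-- Gap lemma: fib(m+4) < g < fib(m+5) forces gφ to be far (> gd (m+2)) from all integers. -/
lemma p1 (m g : ℕ) (h1 : Nat.fib (m+4) < g) (h2 : g < Nat.fib (m+5)) (n : ℤ) :
    gd (m+2) < |(g:ℝ)*φ - n| := by
  set r : ℕ := g - Nat.fib (m+4) with hrdef
  have hfib : Nat.fib (m+5) = Nat.fib (m+4) + Nat.fib (m+3) := by
    rw [show m+5 = (m+3)+2 by ring, Nat.fib_add_two]; ring
  have hr1 : 1 ≤ r := by omega
  have hrlt : r < Nat.fib (m+3) := by omega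
  set n' : ℤ := n - Nat.fib (m+5) with hn'def
  have hsplit : (g:ℝ)*φ - n = ((r:ℝ)*φ - n') - ψ^(m+4) := by
    have hg : (g:ℕ) = r + Nat.fib (m+4) := by omega
    have hfm : (Nat.fib (m+4) : ℝ) * φ = Nat.fib (m+5) - ψ^(m+4) := fib_mul_phi (m+4)
    rw [hg]
    push_cast [hn'def]
    nlinarith [hfm]
  by_cases hcase : gd (m+1) ≤ |(r:ℝ)*φ - n'|
  · -- triangle
    have habs4 : |ψ^(m+4)| = gd (m+4) := abs_psi_pow (m+4)
    have hgd2 : gd (m+1) = gd (m+2) + gd (m+3) := by linarith [gd_add_two (m+1)]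
    have hgd3 : gd (m+2) = gd (m+3) + gd (m+4) := by linarith [gd_add_two (m+2)]
    have htri : |(r:ℝ)*φ - n'| - |ψ^(m+4)| ≤ |(g:ℝ)*φ - n| := by
      rw [hsplit]
      have := abs_sub_abs_le_abs_sub ((r:ℝ)*φ - n') (ψ^(m+4))
      linarith [this]
    have : 0 < gd (m+3) - gd (m+4) := by
      have := gd_succ_lt (m+3)
      linarith
    linarith [htri, habs4, gd_succ_lt (m+3)]
  · -- exact case
    obtain ⟨hreq, hx⟩ := ba_unique m r n' hr1 hrlt (not_le.mp hcase)
    rw [hsplit, hx]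
    have hpsi2 : ψ^(m+4) = ψ^(m+2) * gd 2 := by
      have : ψ^(m+4) = ψ^(m+2) * ψ^2 := by ring
      rw [this, Real.goldenConj_sq]
      congr 1
      rw [gd_two]
      nlinarith [Real.one_sub_goldenConj]
    have : -ψ^(m+2) - ψ^(m+4) = -(ψ^(m+2) * (1 + gd 2)) := by rw [hpsi2]; ring
    rw [this, abs_neg, abs_mul, abs_psi_pow, abs_of_pos (by linarith [gd_pos 2] : (0:ℝ) < 1 + gd 2)]
    nlinarith [gd_pos (m+2), gd_pos 2]

lemma psi_pow_even {k : ℕ} (hk : Even k) : ψ^k = gd k := by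
  rw [psi_pow, hk.neg_one_pow, one_mul]

lemma fract_add_fib_mul (x : ℝ) (k : ℕ) :
    Int.fract (x + (Nat.fib k : ℝ)*φ) = Int.fract (x - ψ^k) := by
  have h : x + (Nat.fib k : ℝ)*φ = (x - ψ^k) + ((Nat.fib (k+1) : ℤ) : ℝ) := by
    push_cast
    linarith [fib_mul_phi k]
  rw [h, Int.fract_add_intCast]

lemma fract_jump (x : ℝ) (k : ℕ) (hk : Even k) (h0 : 0 ≤ Int.fract x - gd k) :
    Int.fract (x + (Nat.fib k : ℝ)*φ) = Int.fract x - gd k := by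
  rw [fract_add_fib_mul, psi_pow_even hk]
  have h1 : Int.fract (x - gd k) = Int.fract (Int.fract x - gd k) := by
    rw [Int.fract_eq_fract]
    exact ⟨⌊x⌋, by rw [Int.fract]; ring⟩
  rw [h1, Int.fract_eq_self.mpr ⟨h0, by linarith [Int.fract_lt_one x, gd_pos k]⟩]

/-- Hitting lemma: within any fib(m+2) consecutive steps, the golden rotation
orbit enters the half-open interval of length gd m below any anchor. -/
lemma sharp (m : ℕ) : ∀ s : ℝ, ∃ L : ℕ, L < Nat.fib (m+2) ∧ Int.fract (s + (L:ℝ)*φ) < gd m := by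
  induction m using Nat.strong_induction_on with
  | _ m ih =>
    match m with
    | 0 =>
      intro s
      refine ⟨0, by norm_num [Nat.fib], ?_⟩
      push_cast
      simpa [gd_zero] using Int.fract_lt_one s
    | 1 =>
      intro s
      by_cases h : Int.fract s < gd 1
      · exact ⟨0, by norm_num [Nat.fib], by push_cast; simpa using h⟩
      · push_neg at h
        refine ⟨1, by norm_num [Nat.fib], ?_⟩
        have h2 : ((1:ℕ):ℝ)*φ = (Nat.fib 2 : ℝ)*φ := by norm_num [Nat.fib]
        rw [h2, fract_jump s 2 (by norm_num) (by rw [gd_two]; nlinarith [h, gd_one, phi_gt])]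
        have := Int.fract_lt_one s
        rw [gd_two, gd_one]
        nlinarith [this, phi_gt]
    | (M+2) =>
      intro s
      rcases Nat.even_or_odd (M+2) with heven | hodd
      · -- even case : use ih (M+1)
        obtain ⟨L₀, hL₀, hu⟩ := ih (M+1) (by omega) s
        by_cases h : Int.fract (s + (L₀:ℝ)*φ) < gd (M+2)
        · exact ⟨L₀, lt_of_lt_of_le hL₀ (Nat.fib_mono (by omega)), h⟩
        · push_neg at h
          refine ⟨L₀ + Nat.fib (M+2), ?_, ?_⟩
          · have hx1 : Nat.fib (M+4) = Nat.fib (M+3) + Nat.fib (M+2) := by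
              rw [show M+4 = (M+2)+2 by ring, Nat.fib_add_two]; ring
            have hx2 : Nat.fib (M+1+2) = Nat.fib (M+3) := by norm_num
            have hx3 : Nat.fib (M+2+2) = Nat.fib (M+4) := by norm_num
            omega
          · have hcast : ((L₀ + Nat.fib (M+2) : ℕ):ℝ)*φ = (L₀:ℝ)*φ + (Nat.fib (M+2):ℝ)*φ := by
              push_cast; ring
            rw [show s + ((L₀ + Nat.fib (M+2) : ℕ):ℝ)*φ = (s + (L₀:ℝ)*φ) + (Nat.fib (M+2):ℝ)*φ by rw [hcast]; ring]
            rw [fract_jump _ (M+2) heven (by linarith)]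
            have := gd_add_two (M+1)
            have h3 := gd_add_two (M+2)
            have h4 := gd_succ_lt (M+2)
            linarith [hu]
      · -- odd case : use ih M ; M+1 and M+3 are even
        have hev1 : Even (M+1) := by rcases hodd with ⟨j, hj⟩; exact ⟨j, by omega⟩
        have hev3 : Even (M+3) := by rcases hev1 with ⟨j, hj⟩; exact ⟨j+1, by omega⟩
        obtain ⟨L₀, hL₀, hu⟩ := ih M (by omega) s
        by_cases h1 : Int.fract (s + (L₀:ℝ)*φ) < gd (M+2)
        · exact ⟨L₀, lt_of_lt_of_le hL₀ (Nat.fib_mono (by omega)), h1⟩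
        · push_neg at h1
          by_cases h2 : gd (M+1) ≤ Int.fract (s + (L₀:ℝ)*φ)
          · refine ⟨L₀ + Nat.fib (M+1), ?_, ?_⟩
            · have hfa : Nat.fib (M+3) = Nat.fib (M+2) + Nat.fib (M+1) := by
                rw [show M+3 = (M+1)+2 by ring, Nat.fib_add_two]; ring
              have hfb : Nat.fib (M+3) ≤ Nat.fib (M+4) := Nat.fib_mono (by omega)
              have hx3 : Nat.fib (M+2+2) = Nat.fib (M+4) := by norm_num
              omega
            · rw [show s + ((L₀ + Nat.fib (M+1) : ℕ):ℝ)*φ = (s + (L₀:ℝ)*φ) + (Nat.fib (M+1):ℝ)*φ by push_cast; ring]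
              rw [fract_jump _ (M+1) hev1 (by linarith)]
              linarith [gd_add_two M, hu]
          · push_neg at h2
            refine ⟨L₀ + Nat.fib (M+3), ?_, ?_⟩
            · have hfa : Nat.fib (M+4) = Nat.fib (M+3) + Nat.fib (M+2) := by
                rw [show M+4 = (M+2)+2 by ring, Nat.fib_add_two]; ring
              have hx3 : Nat.fib (M+2+2) = Nat.fib (M+4) := by norm_num
              omega
            · rw [show s + ((L₀ + Nat.fib (M+3) : ℕ):ℝ)*φ = (s + (L₀:ℝ)*φ) + (Nat.fib (M+3):ℝ)*φ by push_cast; ring]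
              have hge : 0 ≤ Int.fract (s + (L₀:ℝ)*φ) - gd (M+3) := by
                have := gd_succ_lt (M+2)
                linarith
              rw [fract_jump _ (M+3) hev3 hge]
              linarith [gd_add_two (M+1), h2]



def MwP (n : ℕ) : Prop := Int.fract (((n:ℝ)+1) * φ) < 2 - φ

open Classical in
noncomputable def Mw (n : ℕ) : Bool := decide (MwP n)

lemma Mw_iff (n : ℕ) : Mw n = true ↔ MwP n := by simp [Mw]

lemma Phi_add_two (n : ℕ) : Phi (n+2) = Phi (n+1) + Phi n := by
  simp [Phi, fibWord]

lemma Phi_eq_fib : ∀ n, Phi n = Nat.fib (n+2) := by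
  intro n
  induction n using Nat.strong_induction_on with
  | _ n ih =>
    match n with
    | 0 => rfl
    | 1 => rfl
    | (k+2) =>
      rw [Phi_add_two, ih (k+1) (by omega), ih k (by omega)]
      show Nat.fib (k+3) + Nat.fib (k+2) = Nat.fib (k+4)
      have h : Nat.fib (k+4) = Nat.fib (k+2) + Nat.fib (k+3) := Nat.fib_add_two
      omega

lemma lt_Phi (n : ℕ) : n + 1 ≤ Phi n := by
  induction n using Nat.strong_induction_on with
  | _ n ih =>
    match n with
    | 0 => norm_num [Phi, fibWord]
    | 1 => norm_num [Phi, fibWord]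
    | (k+2) =>
      have h1 := ih (k+1) (by omega)
      have h2 := ih k (by omega)
      rw [Phi_add_two]
      omega

lemma fract_eval (x : ℝ) (n : ℤ) (h1 : (n:ℝ) ≤ x) (h2 : x < n+1) : Int.fract x = x - n := by
  rw [Int.fract, Int.floor_eq_iff.mpr ⟨h1, h2⟩]

lemma Mw0 : ¬ MwP 0 := by
  unfold MwP
  rw [show ((0:ℕ):ℝ)+1 = 1 by norm_num, one_mul,
    fract_eval φ 1 (by push_cast; nlinarith [phi_gt]) (by push_cast; nlinarith [phi_lt])]
  push_cast
  nlinarith [phi_gt]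

lemma Mw1 : MwP 1 := by
  unfold MwP
  rw [show (((1:ℕ):ℝ)+1) * φ = 2*φ by push_cast; ring,
    fract_eval (2*φ) 3 (by push_cast; nlinarith [phi_gt]) (by push_cast; nlinarith [phi_lt])]
  push_cast
  nlinarith [phi_lt]

lemma Mw2 : ¬ MwP 2 := by
  unfold MwP
  rw [show (((2:ℕ):ℝ)+1) * φ = 3*φ by push_cast; ring,
    fract_eval (3*φ) 4 (by push_cast; nlinarith [phi_gt]) (by push_cast; nlinarith [phi_lt])]
  push_cast
  nlinarith [phi_gt]

lemma Mw3 : ¬ MwP 3 := by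
  unfold MwP
  rw [show (((3:ℕ):ℝ)+1) * φ = 4*φ by push_cast; ring,
    fract_eval (4*φ) 6 (by push_cast; nlinarith [phi_gt]) (by push_cast; nlinarith [phi_lt])]
  push_cast
  nlinarith [phi_gt]

lemma Mw4 : MwP 4 := by
  unfold MwP
  rw [show (((4:ℕ):ℝ)+1) * φ = 5*φ by push_cast; ring,
    fract_eval (5*φ) 8 (by push_cast; nlinarith [phi_gt]) (by push_cast; nlinarith [phi_lt])]
  push_cast
  nlinarith [phi_lt]

/-- Key recurrence step for the mechanical word. -/
lemma mech_key : ∀ m, ∀ j, j < Nat.fib (m+2) → (MwP (Nat.fib (m+3) + j) ↔ MwP j) := by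
  intro m
  match m with
  | 0 =>
    intro j hj
    interval_cases j
    · rw [show Nat.fib 3 = 2 from rfl]
      simpa using Iff.intro (fun h => absurd h Mw2) (fun h => absurd h Mw0)
  | 1 =>
    intro j hj
    interval_cases j
    · rw [show Nat.fib 4 = 3 from rfl]
      simpa using Iff.intro (fun h => absurd h Mw3) (fun h => absurd h Mw0)
    · rw [show Nat.fib 4 = 3 from rfl]
      simpa using Iff.intro (fun _ => Mw1) (fun _ => Mw4)
  | (m+2) =>
    intro j hj'
    show MwP (Nat.fib (m+5) + j) ↔ MwP j
    have hj : j < Nat.fib (m+4) := hj'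
    set x : ℝ := Int.fract (((j:ℝ)+1) * φ) with hxdef
    have hx01 : 0 ≤ x ∧ x < 1 := ⟨Int.fract_nonneg _, Int.fract_lt_one _⟩
    set n₀ : ℤ := ⌊((j:ℝ)+1) * φ⌋ with hn₀
    have hxeq : x = ((j:ℝ)+1) * φ - n₀ := rfl
    have hfiblt : Nat.fib (m+4) < Nat.fib (m+5) := by
      have h1 : Nat.fib (m+5) = Nat.fib (m+4) + Nat.fib (m+3) := by
        rw [show m+5 = (m+3)+2 by ring, Nat.fib_add_two]; ring
      have h2 : 0 < Nat.fib (m+3) := Nat.fib_pos.mpr (by omega)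
      omega
    have hj1 : (1:ℕ) ≤ j+1 := by omega
    have hj1lt : j+1 < Nat.fib (m+5) := by omega
    have hj2lt : j+2 < Nat.fib (m+5) := by
      have h1 : Nat.fib (m+5) = Nat.fib (m+4) + Nat.fib (m+3) := by
        rw [show m+5 = (m+3)+2 by ring, Nat.fib_add_two]; ring
      have h2 : 2 ≤ Nat.fib (m+3) := by
        calc 2 = Nat.fib 3 := rfl
        _ ≤ Nat.fib (m+3) := Nat.fib_mono (by omega)
      omega
    -- distance of x from 0, 1, and (2-φ)
    have hba1 : gd (m+4) ≤ x := by
      have := ba (m+2) (j+1) n₀ hj1 (by simpa using hj1lt)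
      rw [show ((j+1:ℕ):ℝ) = (j:ℝ)+1 by push_cast; ring] at this
      calc gd (m+4) ≤ |((j:ℝ)+1) * φ - n₀| := this
        _ = x := by rw [abs_of_nonneg (by rw [← hxeq]; exact hx01.1), hxeq]
    have hba2 : gd (m+4) ≤ 1 - x := by
      have := ba (m+2) (j+1) (n₀+1) hj1 (by simpa using hj1lt)
      rw [show ((j+1:ℕ):ℝ) = (j:ℝ)+1 by push_cast; ring] at this
      push_cast at this
      have he : |((j:ℝ)+1) * φ - (n₀+1)| = 1 - x := by
        rw [abs_of_nonpos (by push_cast; rw [hxeq] at hx01; push_cast at hx01; linarith [hx01.2])]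
        push_cast
        rw [hxeq]
        ring
      rw [he] at this
      exact this
    have hba3 : gd (m+4) ≤ |x - (2 - φ)| := by
      have := ba (m+2) (j+2) (n₀+2) (by omega) (by simpa using hj2lt)
      rw [show ((j+2:ℕ):ℝ) = (j:ℝ)+2 by push_cast; ring] at this
      push_cast at this
      have he : |((j:ℝ)+2) * φ - (n₀+2)| = |x - (2 - φ)| := by
        congr 1
        rw [hxeq]
        push_cast
        ring
      rw [he] at this
      exact this
    -- the shift
    have hshift : Int.fract ((((Nat.fib (m+5) + j : ℕ):ℝ)+1) * φ) = x - ψ^(m+5) := by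
      have hc : (((Nat.fib (m+5) + j : ℕ):ℝ)+1) * φ
          = (((j:ℝ)+1) * φ - ψ^(m+5)) + ((Nat.fib (m+6) : ℤ):ℝ) := by
        push_cast
        nlinarith [fib_mul_phi (m+5)]
      rw [hc, Int.fract_add_intCast]
      have h1 : Int.fract (((j:ℝ)+1) * φ - ψ^(m+5)) = Int.fract (x - ψ^(m+5)) := by
        rw [Int.fract_eq_fract]
        exact ⟨n₀, by rw [hxeq]; ring⟩
      rw [h1]
      have hpsi : |ψ^(m+5)| = gd (m+5) := abs_psi_pow _
      have hlt : gd (m+5) < gd (m+4) := gd_succ_lt _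
      have habs := abs_le.mp hpsi.le
      rw [Int.fract_eq_self.mpr ⟨by nlinarith [hba1, habs.2, neg_abs_le (ψ^(m+5)), hpsi], by nlinarith [hba2, le_abs_self (ψ^(m+5)), hpsi]⟩]
    -- conclude
    have hpsi : |ψ^(m+5)| = gd (m+5) := abs_psi_pow _
    have hlt : gd (m+5) < gd (m+4) := gd_succ_lt _
    have habs := abs_le.mp hpsi.le
    unfold MwP
    rw [hshift, ← hxdef]
    constructor
    · intro h
      by_contra hc
      push_neg at hc
      have hx3 : x - (2-φ) ≥ gd (m+4) := by
        rcases le_or_gt (2-φ) x with hcc | hcc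
        · calc gd (m+4) ≤ |x - (2-φ)| := hba3
            _ = x - (2-φ) := abs_of_nonneg (by linarith)
        · linarith
      nlinarith [habs.2]
    · intro h
      have hx3 : x ≤ (2-φ) - gd (m+4) := by
        have h9 : |x - (2-φ)| = -(x - (2-φ)) := abs_of_nonpos (by linarith)
        linarith [hba3, h9]
      nlinarith [habs.1]

lemma fibWord_getD : ∀ m, ∀ j, j < Phi m → ((fibWord m).getD j false = true ↔ MwP j) := by
  intro m
  induction m using Nat.strong_induction_on with
  | _ m ih =>
    match m with
    | 0 =>
      intro j hj
      have hP : Phi 0 = 1 := rfl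
      have hj0 : j = 0 := by omega
      subst hj0
      simp [fibWord, Mw0]
    | 1 =>
      intro j hj
      have hP : Phi 1 = 2 := rfl
      have : j = 0 ∨ j = 1 := by omega
      rcases this with h | h <;> subst h
      · simp [fibWord, Mw0]
      · simp [fibWord, Mw1]
    | (M+2) =>
      intro j hj
      have hP : Phi (M+2) = Phi (M+1) + Phi M := Phi_add_two M
      by_cases h : j < Phi (M+1)
      · have hlen : j < (fibWord (M+1)).length := h
        rw [show fibWord (M+2) = fibWord (M+1) ++ fibWord M from rfl,
          List.getD_append _ _ _ _ hlen]
        exact ih (M+1) (by omega) j h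
      · push_neg at h
        have hlen : (fibWord (M+1)).length ≤ j := h
        rw [show fibWord (M+2) = fibWord (M+1) ++ fibWord M from rfl,
          List.getD_append_right _ _ _ _ hlen]
        have hi : j - Phi (M+1) < Phi M := by omega
        have hih := ih M (by omega) (j - Phi (M+1)) hi
        have hkey := mech_key M (j - Phi (M+1)) (by rw [← Phi_eq_fib]; exact hi)
        have hfib : Nat.fib (M+3) = Phi (M+1) := (Phi_eq_fib (M+1)).symm
        rw [hfib] at hkey
        have hsum : Phi (M+1) + (j - Phi (M+1)) = j := by omega
        rw [hsum] at hkey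
        have : (fibWord (M+1)).length = Phi (M+1) := rfl
        rw [this]
        exact hih.trans hkey.symm

lemma mech (n : ℕ) : fibInf n = true ↔ MwP n := by
  have h := fibWord_getD (n+2) n (by have := lt_Phi (n+2); omega)
  exact h

/-- Separation: if two orbits differ by a rotation δ with gd (m+2) < δ ≤ 1/2 then
within fib (m+4) steps the two mechanical letters differ somewhere. -/
lemma sep_key (m : ℕ) (a₀ b₀ : ℕ) (δ : ℝ) (hδ1 : gd (m+2) < δ) (hδ2 : δ ≤ 1/2)
    (hrel : ∀ L : ℕ, Int.fract ((((b₀+L : ℕ):ℝ)+1)*φ) =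
      Int.fract (Int.fract ((((a₀+L : ℕ):ℝ)+1)*φ) + δ)) :
    ∃ L, L < Nat.fib (m+4) ∧ ¬(MwP (a₀+L) ↔ MwP (b₀+L)) := by
  have hgd2 : gd 2 = 2 - φ := gd_two
  have hgdle : gd (m+2) ≤ 2 - φ := by rw [← hgd2]; exact gd_anti (by omega)
  have hgdpos : 0 < gd (m+2) := gd_pos _
  have hphi : (1.6180:ℝ) < φ := phi_gt
  have hphi' : φ < (1.61805:ℝ) := phi_lt
  by_cases hc : δ ≤ 2 - φ
  · -- target interval just below the boundary 2-φ
    set a : ℝ := (2 - φ) - δ with ha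
    have ha0 : 0 ≤ a := by rw [ha]; linarith
    obtain ⟨L, hL, hfr⟩ := sharp (m+2) (((a₀:ℝ)+1)*φ - a)
    refine ⟨L, hL, ?_⟩
    have hcast : (((a₀:ℝ)+1)*φ - a) + (L:ℝ)*φ = (((a₀+L:ℕ):ℝ)+1)*φ - a := by
      push_cast; ring
    rw [hcast] at hfr
    set u : ℝ := Int.fract ((((a₀+L:ℕ):ℝ)+1)*φ) with hu
    have hu01 : 0 ≤ u ∧ u < 1 := ⟨Int.fract_nonneg _, Int.fract_lt_one _⟩
    have hfr2 : Int.fract (u - a) < gd (m+2) := by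
      have : Int.fract ((((a₀+L:ℕ):ℝ)+1)*φ - a) = Int.fract (u - a) := by
        rw [Int.fract_eq_fract]
        exact ⟨⌊(((a₀+L:ℕ):ℝ)+1)*φ⌋, by rw [hu, Int.fract]; ring⟩
      rw [← this]; exact hfr
    have hua : a ≤ u ∧ u < a + gd (m+2) := by
      rcases le_or_gt a u with h | h
      · have : Int.fract (u - a) = u - a := Int.fract_eq_self.mpr ⟨by linarith, by linarith [hu01.2]⟩
        rw [this] at hfr2
        exact ⟨h, by linarith⟩
      · exfalso
        have : Int.fract (u - a) = u - a + 1 := by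
          have : Int.fract ((u - a) + 1) = Int.fract (u-a) := Int.fract_add_one _
          rw [← this, Int.fract_eq_self.mpr ⟨by linarith, by rw [ha]; linarith⟩]
        rw [this] at hfr2
        rw [ha] at hfr2
        linarith
    -- A side: u < 2-φ ; B side: fract (u + δ) = u + δ ≥ 2-φ
    have hA : MwP (a₀+L) := by
      unfold MwP
      rw [← hu]
      rw [ha] at hua
      linarith [hua.2, hδ1]
    have hB : ¬ MwP (b₀+L) := by
      unfold MwP
      rw [hrel L, ← hu]
      have : Int.fract (u + δ) = u + δ := by
        apply Int.fract_eq_self.mpr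
        constructor
        · linarith [hua.1, ha0]
        · rw [ha] at hua; linarith [hua.2, hgdle]
      rw [this]
      rw [ha] at hua
      push_neg
      linarith [hua.1]
    exact fun hiff => hB (hiff.mp hA)
  · -- target interval just below the boundary 1
    push_neg at hc
    set a : ℝ := 1 - δ with ha
    have ha0 : 0 ≤ a := by rw [ha]; linarith
    obtain ⟨L, hL, hfr⟩ := sharp (m+2) (((a₀:ℝ)+1)*φ - a)
    refine ⟨L, hL, ?_⟩
    have hcast : (((a₀:ℝ)+1)*φ - a) + (L:ℝ)*φ = (((a₀+L:ℕ):ℝ)+1)*φ - a := by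
      push_cast; ring
    rw [hcast] at hfr
    set u : ℝ := Int.fract ((((a₀+L:ℕ):ℝ)+1)*φ) with hu
    have hu01 : 0 ≤ u ∧ u < 1 := ⟨Int.fract_nonneg _, Int.fract_lt_one _⟩
    have hfr2 : Int.fract (u - a) < gd (m+2) := by
      have : Int.fract ((((a₀+L:ℕ):ℝ)+1)*φ - a) = Int.fract (u - a) := by
        rw [Int.fract_eq_fract]
        exact ⟨⌊(((a₀+L:ℕ):ℝ)+1)*φ⌋, by rw [hu, Int.fract]; ring⟩
      rw [← this]; exact hfr
    have hua : a ≤ u ∧ u < a + gd (m+2) := by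
      rcases le_or_gt a u with h | h
      · have : Int.fract (u - a) = u - a := Int.fract_eq_self.mpr ⟨by linarith, by linarith [hu01.2]⟩
        rw [this] at hfr2
        exact ⟨h, by linarith⟩
      · exfalso
        have : Int.fract (u - a) = u - a + 1 := by
          have : Int.fract ((u - a) + 1) = Int.fract (u-a) := Int.fract_add_one _
          rw [← this, Int.fract_eq_self.mpr ⟨by linarith, by rw [ha]; linarith⟩]
        rw [this] at hfr2
        rw [ha] at hfr2
        linarith
    have hA : ¬ MwP (a₀+L) := by
      unfold MwP
      rw [← hu]
      push_neg
      rw [ha] at hua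
      linarith [hua.1]
    have hB : MwP (b₀+L) := by
      unfold MwP
      rw [hrel L, ← hu]
      have h1le : (1:ℝ) ≤ u + δ := by rw [ha] at hua; linarith [hua.1]
      have h2lt : u + δ < 2 := by linarith [hu01.2]
      rw [fract_eval (u + δ) 1 (by push_cast; linarith) (by push_cast; linarith)]
      push_cast
      rw [ha] at hua
      linarith [hua.2, hgdle]
    exact fun hiff => hA (hiff.mpr hB)

/-- Main combinatorial lemma: a factor of the infinite Fibonacci word of length ℓ ≥ fib (m+2)
cannot reoccur at a distance g with ℓ < g < fib (m+3). -/
lemma lemB (m ℓ g p : ℕ) (hbit : ∀ j, j < ℓ → fibInf (p+j) = fibInf (p+g+j))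
    (h1 : Nat.fib (m+2) ≤ ℓ) (h2 : ℓ < g) (h3 : g < Nat.fib (m+3)) : False := by
  match m with
  | 0 =>
    have e2 : Nat.fib (0+2) = 1 := rfl
    have e3 : Nat.fib (0+3) = 2 := rfl
    omega
  | 1 =>
    have e3 : Nat.fib (1+2) = 2 := rfl
    have e4 : Nat.fib (1+3) = 3 := rfl
    omega
  | (m+2) =>
    have h1' : Nat.fib (m+4) ≤ ℓ := h1
    have h3' : g < Nat.fib (m+5) := h3
    set δ : ℝ := Int.fract ((g:ℝ)*φ) with hδ
    have hδ1 : gd (m+2) < δ := by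
      have hp := p1 m g (by omega) h3' ⌊(g:ℝ)*φ⌋
      have : |(g:ℝ)*φ - ⌊(g:ℝ)*φ⌋| = δ := by
        rw [hδ, Int.fract, abs_of_nonneg]
        have := Int.fract_nonneg ((g:ℝ)*φ)
        rw [Int.fract] at this
        exact this
      linarith [hp, this.symm.le, this.ge, this.le]
    have hδ2 : gd (m+2) < 1 - δ := by
      have hp := p1 m g (by omega) h3' (⌊(g:ℝ)*φ⌋ + 1)
      have : |(g:ℝ)*φ - (⌊(g:ℝ)*φ⌋ + 1 : ℤ)| = 1 - δ := by
        rw [abs_of_nonpos]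
        · push_cast
          rw [hδ, Int.fract]
          ring
        · push_cast
          have := Int.fract_lt_one ((g:ℝ)*φ)
          rw [Int.fract] at this
          linarith
      linarith [hp, this.le, this.ge]
    have hbit' : ∀ L, L < Nat.fib (m+4) → (MwP (p+L) ↔ MwP (p+g+L)) := by
      intro L hL
      rw [← mech, ← mech, hbit L (by omega)]
    rcases le_or_gt δ (1/2) with hhalf | hhalf
    · have hrel : ∀ L : ℕ, Int.fract (((((p+g)+L : ℕ):ℝ)+1)*φ) =
          Int.fract (Int.fract ((((p+L : ℕ):ℝ)+1)*φ) + δ) := by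
        intro L
        rw [Int.fract_eq_fract]
        refine ⟨⌊(((p+L:ℕ):ℝ)+1)*φ⌋ + ⌊(g:ℝ)*φ⌋, ?_⟩
        rw [hδ]
        simp only [Int.fract]
        push_cast
        ring
      obtain ⟨L, hL, hne⟩ := sep_key m p (p+g) δ hδ1 hhalf hrel
      exact hne (hbit' L hL)
    · have hrel : ∀ L : ℕ, Int.fract ((((p+L : ℕ):ℝ)+1)*φ) =
          Int.fract (Int.fract (((((p+g)+L : ℕ):ℝ)+1)*φ) + (1-δ)) := by
        intro L
        rw [Int.fract_eq_fract]
        refine ⟨⌊(((p+g+L:ℕ):ℝ)+1)*φ⌋ - ⌊(g:ℝ)*φ⌋ - 1, ?_⟩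
        rw [hδ]
        simp only [Int.fract]
        push_cast
        ring
      obtain ⟨L, hL, hne⟩ := sep_key m (p+g) p (1-δ) (by linarith) (by linarith) hrel
      exact hne (hbit' L hL).symm


/-- Lemma 6: any nonempty factor `w` of the infinite Fibonacci word with
`|w| < Φ_k` (`k ≥ 2`) satisfies `|ShortBord(w)| < Φ_{k-2}`. -/

theorem shortBordLen_fibFactor (k : ℕ) (hk : 2 ≤ k) (w : List Bool)
    (hw : w ≠ []) (hf : IsFibFactor w) (hlen : w.length < Phi k) :
    shortBordLen w < Phi (k - 2) := by
  obtain ⟨i₀, hocc⟩ := hf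
  have hwpos : 0 < w.length := List.length_pos_iff.mpr hw
  have hne : ({j | w.take j <:+ w ∧ 2 * j < w.length} : Set ℕ).Nonempty :=
    ⟨0, by simp [List.nil_suffix], by simpa⟩
  have hbdd : BddAbove ({j | w.take j <:+ w ∧ 2 * j < w.length} : Set ℕ) :=
    ⟨w.length, fun j hj => by have := hj.2; omega⟩
  have hmem : shortBordLen w ∈ {j | w.take j <:+ w ∧ 2 * j < w.length} :=
    Nat.sSup_mem hne hbdd
  set j := shortBordLen w with hjdef
  obtain ⟨hsuf, hlt2⟩ := hmem
  by_contra hcon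
  push_neg at hcon
  -- getD description of w
  have hmr : ∀ (n x : ℕ), x < n →
      ((List.range n).map (fun y => fibInf (i₀+y))).getD x false = fibInf (i₀+x) := by
    intro n x hx
    rw [List.getD_eq_getElem _ _ (by simpa using hx), List.getElem_map, List.getElem_range]
  have hjle : j ≤ w.length := by omega
  obtain ⟨t, ht⟩ := hsuf
  have htlen : t.length = w.length - j := by
    have := congrArg List.length ht
    simp [List.length_take, Nat.min_eq_left hjle] at this
    omega
  have htake : w.take j = (List.range j).map (fun y => fibInf (i₀+y)) := by
    conv_lhs => rw [hocc]
    rw [← List.map_take, List.take_range, Nat.min_eq_left hjle]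
  have hbit : ∀ x, x < j → fibInf (i₀ + x) = fibInf (i₀ + (w.length - j) + x) := by
    intro x hx
    have hx1 : x < w.length := by omega
    have hx2 : t.length + x < w.length := by omega
    have e1 : w.getD x false = fibInf (i₀ + x) := by
      rw [hocc]; exact hmr _ _ hx1
    have e2 : w.getD (t.length + x) false = fibInf (i₀ + (t.length + x)) := by
      rw [hocc]; exact hmr _ _ hx2
    have e3 : w.getD (t.length + x) false = (w.take j).getD x false := by
      conv_lhs => rw [← ht]
      rw [List.getD_append_right _ _ _ _ (by omega), Nat.add_sub_cancel_left]
    have e4 : (w.take j).getD x false = fibInf (i₀ + x) := by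
      rw [htake]; exact hmr j x hx
    have : fibInf (i₀ + x) = fibInf (i₀ + (t.length + x)) := by
      rw [← e2, e3, e4]
    rw [this]
    congr 1
    omega
  have hΦ : Phi k = Phi (k-1) + Phi (k-2) := by
    have h := Phi_add_two (k-2)
    have e1 : k - 2 + 2 = k := by omega
    have e2 : k - 2 + 1 = k - 1 := by omega
    rw [e1, e2] at h
    exact h
  apply lemB (k-2) j (w.length - j) i₀ hbit
  · rw [← Phi_eq_fib]
    exact hcon
  · omega
  · rw [show k-2+3 = (k-1)+2 by omega, ← Phi_eq_fib]
    have hj2 : Phi (k-2) ≤ j := hcon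
    omega
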